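/- arXiv:1801.08491 — 2 statements merged into one kernel-verified Lean document; each statement's English description precedes it below -/
import Mathlib

section
/- Let 𝒳 and 𝒴 be complex Euclidean spaces and let X be an operator on 𝒴⊗𝒳. Then X is positive semidefinite with Tr_𝒴(X) = 1_𝒳 if and only if there exists a completely positive unital linear map Ψ from L(𝒴) to L(𝒳) such that X = (Id_{L(𝒴)} ⊗ Ψ)(vec(1_𝒴) vec(1_𝒴)*). -/
open Matrix
open scoped ComplexOrder Kronecker

noncomputable section

/-- The outer product `u u*` of a vector, as a matrix. -/
def outerM {ι : Type} (u : ι → ℂ) : Matrix ι ι ℂ :=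
  Matrix.of fun p q => u p * star (u q)

/-- Partial trace over the first tensor factor. -/
def ptraceLeft {ι κ : Type} [Fintype ι] (M : Matrix (ι × κ) (ι × κ) ℂ) : Matrix κ κ ℂ :=
  Matrix.of fun a b => ∑ i, M (i, a) (i, b)
/-- Application of a map to the blocks of a matrix corresponding to the first tensor
factor; for a linear map `T` this is exactly `(T ⊗ Id)(M)`. -/
def blockApplyR {α β γ : Type} (T : Matrix α α ℂ → Matrix β β ℂ)
    (M : Matrix (α × γ) (α × γ) ℂ) : Matrix (β × γ) (β × γ) ℂ :=
  Matrix.of fun p q => T (Matrix.of fun a b => M (a, p.2) (b, q.2)) p.1 q.1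

/-- Application of a map to the blocks of a matrix corresponding to the second tensor
factor; for a linear map `T` this is exactly `(Id ⊗ T)(M)`. -/
def blockApplyL {α β γ : Type} (T : Matrix α α ℂ → Matrix β β ℂ)
    (M : Matrix (γ × α) (γ × α) ℂ) : Matrix (γ × β) (γ × β) ℂ :=
  Matrix.of fun p q => T (Matrix.of fun a b => M (p.1, a) (q.1, b)) p.2 q.2

/-- Complete positivity of a superoperator: all of its amplifications `Φ ⊗ Id` map
positive semidefinite matrices to positive semidefinite matrices. -/
def IsCP {κ ι : Type} [Fintype κ] [Fintype ι]
    (Φ : Matrix κ κ ℂ →ₗ[ℂ] Matrix ι ι ℂ) : Prop :=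
  ∀ (d : ℕ) (M : Matrix (κ × Fin d) (κ × Fin d) ℂ),
    M.PosSemidef → (blockApplyR (fun N => Φ N) M).PosSemidef

/-- Trace preservation of a superoperator. -/
def IsTP {κ ι : Type} [Fintype κ] [Fintype ι]
    (Φ : Matrix κ κ ℂ →ₗ[ℂ] Matrix ι ι ℂ) : Prop :=
  ∀ M, (Φ M).trace = M.trace

/-- A channel is a completely positive trace-preserving linear map. -/
def IsChannel {κ ι : Type} [Fintype κ] [Fintype ι]
    (Φ : Matrix κ κ ℂ →ₗ[ℂ] Matrix ι ι ℂ) : Prop :=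
  IsCP Φ ∧ IsTP Φ

/-- Unitality of a superoperator. -/
def IsUnital {κ ι : Type} [Fintype κ] [Fintype ι] [DecidableEq κ] [DecidableEq ι]
    (Φ : Matrix κ κ ℂ →ₗ[ℂ] Matrix ι ι ℂ) : Prop :=
  Φ 1 = 1

/-- The Choi representation `J(Φ) = ∑ Φ(E_{ab}) ⊗ E_{ab}` of a superoperator. -/
def choiM {κ ι : Type} [DecidableEq κ]
    (Φ : Matrix κ κ ℂ →ₗ[ℂ] Matrix ι ι ℂ) : Matrix (ι × κ) (ι × κ) ℂ :=
  Matrix.of fun p q => Φ (Matrix.single p.2 q.2 1) p.1 q.1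

/-- The vectorization `vec(1)` of the identity: the (non-normalized) maximally
entangled vector. -/
def vecOne (ι : Type) [DecidableEq ι] : ι × ι → ℂ :=
  fun p => if p.1 = p.2 then 1 else 0

lemma outerM_posSemidef {α : Type} [Fintype α] (u : α → ℂ) : (outerM u).PosSemidef := by
  have h : outerM u =
      (Matrix.of (fun (i : α) (_ : Unit) => u i)) *
        (Matrix.of (fun (i : α) (_ : Unit) => u i))ᴴ := by
    ext p q
    simp [outerM, Matrix.mul_apply, Matrix.conjTranspose_apply]
  rw [h]
  exact Matrix.posSemidef_self_mul_conjTranspose _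

lemma sum_stdBasis_diag_eq_one {α : Type} [Fintype α] [DecidableEq α] :
    ∑ a : α, Matrix.single a a (1:ℂ) = 1 := by
  ext x y
  by_cases h : x = y
  · simp [Matrix.sum_apply, Matrix.single, Matrix.one_apply, h, Finset.sum_ite_eq]
  · simp only [Matrix.sum_apply, Matrix.single, Matrix.one_apply, Matrix.of_apply]
    rw [Finset.sum_eq_zero, if_neg h]
    intro a _
    rw [if_neg]
    rintro ⟨rfl, rfl⟩; exact h rfl

lemma sum_swap_helper {A K L : Type} [Fintype A] [Fintype K] [Fintype L]
    (f g : L → A → ℂ) (u v : K → A → ℂ) :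
    ∑ a, ∑ b, (∑ l, star (f l a) * g l b) * (∑ k, star (u k a) * v k b)
      = ∑ k, ∑ l, star (∑ a, f l a * u k a) * (∑ b, g l b * v k b) := by
  simp only [Finset.sum_mul, Finset.mul_sum, star_sum, star_mul']
  conv_lhs => enter [2, b]; rw [Finset.sum_comm]
  rw [Finset.sum_comm]
  conv_lhs => enter [2, k, 2, b]; rw [Finset.sum_comm]
  conv_lhs => enter [2, k]; rw [Finset.sum_comm]
  conv_lhs => enter [2, k, 2, l]; rw [Finset.sum_comm]
  refine Finset.sum_congr rfl fun k _ => Finset.sum_congr rfl fun l _ =>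
    Finset.sum_congr rfl fun x _ => Finset.sum_congr rfl fun y _ => by ring

open scoped MatrixOrder in
lemma posSemidef_exists_conjTranspose_mul_self {n : Type} [Fintype n] [DecidableEq n]
    {A : Matrix n n ℂ} (hA : A.PosSemidef) : ∃ B : Matrix n n ℂ, A = Bᴴ * B := by
  obtain ⟨X, hX, -, rfl⟩ :=
    CFC.exists_sqrt_of_isSelfAdjoint_of_quasispectrumRestricts hA.isHermitian
      (QuasispectrumRestricts.nnreal_of_nonneg hA.nonneg)
  exact ⟨X, by rw [← Matrix.star_eq_conjTranspose, hX.star_eq]⟩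

theorem choi_unital_characterization
    (ι κ : Type) [Fintype ι] [Fintype κ] [DecidableEq ι] [DecidableEq κ]
    (M : Matrix (κ × ι) (κ × ι) ℂ) :
    (M.PosSemidef ∧ ptraceLeft M = 1) ↔
      ∃ Ψ : Matrix κ κ ℂ →ₗ[ℂ] Matrix ι ι ℂ,
        IsCP Ψ ∧ IsUnital Ψ ∧ M = blockApplyL (fun N => Ψ N) (outerM (vecOne κ)) := by
  constructor
  · rintro ⟨hM, hTr⟩
    refine ⟨{ toFun := fun A => Matrix.of fun p q => ∑ a, ∑ b, A a b * M (a, p) (b, q),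
              map_add' := by
                intro A B; ext p q
                simp [Matrix.add_apply, add_mul, Finset.sum_add_distrib]
              map_smul' := by
                intro c A; ext p q
                simp [Matrix.smul_apply, smul_eq_mul, Finset.mul_sum, mul_assoc] },
          ?_, ?_, ?_⟩
    · -- CP
      intro d N hN
      obtain ⟨B, hB⟩ := posSemidef_exists_conjTranspose_mul_self hM
      obtain ⟨C, hC⟩ := posSemidef_exists_conjTranspose_mul_self hN
      have key : blockApplyR
            (fun A => (Matrix.of fun p q => ∑ a, ∑ b, A a b * M (a, p) (b, q) : Matrix ι ι ℂ)) N
          = (Matrix.of fun (kl : (κ × ι) × (κ × Fin d)) (pi : ι × Fin d) =>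
              ∑ a, C kl.2 (a, pi.2) * B kl.1 (a, pi.1))ᴴ *
            (Matrix.of fun (kl : (κ × ι) × (κ × Fin d)) (pi : ι × Fin d) =>
              ∑ a, C kl.2 (a, pi.2) * B kl.1 (a, pi.1)) := by
        ext ⟨p, i⟩ ⟨q, j⟩
        simp only [blockApplyR, Matrix.of_apply, Matrix.mul_apply,
          Matrix.conjTranspose_apply, hB, hC]
        conv_rhs => rw [Fintype.sum_prod_type]
        exact sum_swap_helper (fun l a => C l (a, i)) (fun l b => C l (b, j))
          (fun k a => B k (a, p)) (fun k b => B k (b, q))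
      have := key ▸ Matrix.posSemidef_conjTranspose_mul_self
        (Matrix.of fun (kl : (κ × ι) × (κ × Fin d)) (pi : ι × Fin d) =>
          ∑ a, C kl.2 (a, pi.2) * B kl.1 (a, pi.1))
      exact this
    · -- Unital
      unfold IsUnital
      ext p q
      show ∑ a, ∑ b, (1 : Matrix κ κ ℂ) a b * M (a, p) (b, q) = (1 : Matrix ι ι ℂ) p q
      have h1 : ∑ a, ∑ b, (1 : Matrix κ κ ℂ) a b * M (a, p) (b, q) = ptraceLeft M p q := by
        simp [Matrix.one_apply, ite_mul, Finset.sum_ite_eq, ptraceLeft]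
      rw [h1, hTr]
    · -- M = blockApplyL
      ext ⟨a, p⟩ ⟨b, q⟩
      show M (a, p) (b, q)
        = ∑ x, ∑ y, outerM (vecOne κ) (a, x) (b, y) * M (x, p) (y, q)
      simp [outerM, vecOne, apply_ite (star : ℂ → ℂ), ite_mul, Finset.sum_ite_eq]
  · rintro ⟨Ψ, hCP, hU, rfl⟩
    have hX : (outerM (vecOne κ)).PosSemidef := outerM_posSemidef _
    constructor
    · -- PSD
      have hN : ((outerM (vecOne κ)).submatrix
          (fun ai : κ × Fin (Fintype.card κ) => ((Fintype.equivFin κ).symm ai.2, ai.1))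
          (fun ai : κ × Fin (Fintype.card κ) => ((Fintype.equivFin κ).symm ai.2, ai.1))).PosSemidef :=
        hX.submatrix _
      have h2 := hCP (Fintype.card κ) _ hN
      have heq : blockApplyL (fun A => Ψ A) (outerM (vecOne κ))
          = (blockApplyR (fun A => Ψ A)
              ((outerM (vecOne κ)).submatrix
                (fun ai : κ × Fin (Fintype.card κ) => ((Fintype.equivFin κ).symm ai.2, ai.1))
                (fun ai : κ × Fin (Fintype.card κ) => ((Fintype.equivFin κ).symm ai.2, ai.1)))).submatrix
              (fun cp : κ × ι => (cp.2, Fintype.equivFin κ cp.1))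
              (fun cp : κ × ι => (cp.2, Fintype.equivFin κ cp.1)) := by
        ext ⟨c, p⟩ ⟨c', q⟩
        simp only [blockApplyL, blockApplyR, Matrix.of_apply, Matrix.submatrix_apply,
          Equiv.symm_apply_apply]
      rw [heq]
      exact h2.submatrix _
    · -- ptrace
      ext p q
      show ∑ a, Ψ (Matrix.of fun x y => outerM (vecOne κ) (a, x) (a, y)) p q
        = (1 : Matrix ι ι ℂ) p q
      have hblk : ∀ a : κ, (Matrix.of fun x y => outerM (vecOne κ) (a, x) (a, y))
          = Matrix.single a a (1:ℂ) := by
        intro a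
        ext x y
        by_cases h1 : a = x <;> by_cases h2 : a = y <;>
          simp [outerM, vecOne, Matrix.single, h1, h2]
      simp_rw [hblk]
      have : ∑ a, Ψ (Matrix.single a a (1:ℂ)) p q
          = (∑ a, Ψ (Matrix.single a a (1:ℂ))) p q := by
        simp [Matrix.sum_apply]
      rw [this, ← map_sum, sum_stdBasis_diag_eq_one, hU]
end
end

section
/- Let n be a positive integer, let 𝒳₁,…,𝒳ₙ, 𝒴₁,…,𝒴ₙ, and 𝒵₀,…,𝒵ₙ be complex Euclidean spaces with dim(𝒵_{k−1}⊗𝒳_k) = dim(𝒵_k⊗𝒴_k) for all k, let U_k be invertible isometries from 𝒵_{k−1}⊗𝒳_k to 𝒴_k⊗𝒵_k, and let w ∈ 𝒵ₙ be a unit vector. Define V = (1_{𝒳ₙ⊗⋯⊗𝒳₂} ⊗ U₁ᵀ) ⋯ (Uₙᵀ ⊗ 1_{𝒴_{n−1}⊗⋯⊗𝒴₁}), an invertible isometry from 𝒵ₙ⊗𝒴ₙ⊗⋯⊗𝒴₁ to 𝒵₀⊗𝒳ₙ⊗⋯⊗𝒳₁, and define the channel Θₙ from L(𝒴ₙ⊗⋯⊗𝒴₁)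 to L(𝒳ₙ⊗⋯⊗𝒳₁) by Θₙ(Z) = Tr_{𝒵₀}(V (w w* ⊗ Z) V*). Then J(Θₙ) ∈ Sₙ(𝒴ₙ,…,𝒴₁;𝒳ₙ,…,𝒳₁). -/
open Matrix
open scoped ComplexOrder Kronecker

noncomputable section

/-- Index type for operators on `𝒴₁ ⊗ ⋯ ⊗ 𝒴ₙ ⊗ 𝒳₁ ⊗ ⋯ ⊗ 𝒳ₙ`. -/
abbrev StratIdx (X Y : ℕ → Type) (n : ℕ) : Type :=
  ((i : Fin n) → Y i) × ((i : Fin n) → X i)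

/-- The set `Sₙ(𝒳₁,…,𝒳ₙ;𝒴₁,…,𝒴ₙ)` of `n`-turn strategy operators, defined recursively. -/
def IsStrategy (X Y : ℕ → Type) [∀ i, Fintype (X i)] [∀ i, Fintype (Y i)]
    [∀ i, DecidableEq (X i)] [∀ i, DecidableEq (Y i)] :
    (n : ℕ) → Matrix (StratIdx X Y n) (StratIdx X Y n) ℂ → Prop
  | 0, M => M = 1
  | n + 1, M =>
      M.PosSemidef ∧
      ∃ N : Matrix (StratIdx X Y n) (StratIdx X Y n) ℂ,
        IsStrategy X Y n N ∧
        ∀ (y y' : (i : Fin n) → Y i) (x x' : (i : Fin (n + 1)) → X i),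
          ∑ b : Y n, M (Fin.snoc y b, x) (Fin.snoc y' b, x')
            = N (y, Fin.init x) (y', Fin.init x')
              * (if x (Fin.last n) = x' (Fin.last n) then 1 else 0)

/-- Reversal of the tensor factors of a (dependent) tuple. -/
def revFun {Z : ℕ → Type} {n : ℕ} (f : (i : Fin n) → Z i) : (i : Fin n) → Z (n - 1 - i) :=
  fun i => f ⟨n - 1 - ↑i, by have := i.isLt; omega⟩

/-- The vector `W u`, where `W` reverses the order of all tensor factors of
`𝒴₁ ⊗ ⋯ ⊗ 𝒴ₙ ⊗ 𝒳₁ ⊗ ⋯ ⊗ 𝒳ₙ`. -/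
def wVec {X Y : ℕ → Type} {n : ℕ} [∀ i, Fintype (X i)] [∀ i, Fintype (Y i)]
    [∀ i, DecidableEq (X i)] [∀ i, DecidableEq (Y i)]
    (u : StratIdx X Y n → ℂ) :
    StratIdx (fun i => Y (n - 1 - i)) (fun i => X (n - 1 - i)) n → ℂ :=
  fun p => ∑ q : StratIdx X Y n, if p = (revFun q.2, revFun q.1) then u q else 0


/-- Index type for `𝒴₁ ⊗ ⋯ ⊗ 𝒴ₖ`. -/
abbrev YPart (Y : ℕ → Type) (n k : ℕ) : Type := (i : {j : Fin n // (j : ℕ) < k}) → Y i.1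

/-- Index type for `𝒳_{k+1} ⊗ ⋯ ⊗ 𝒳ₙ`. -/
abbrev XPart (X : ℕ → Type) (n k : ℕ) : Type := (i : {j : Fin n // k ≤ (j : ℕ)}) → X i.1

/-- Index type for `𝒴₁ ⊗ ⋯ ⊗ 𝒴ₖ ⊗ 𝒵ₖ ⊗ 𝒳_{k+1} ⊗ ⋯ ⊗ 𝒳ₙ`, the state space after the
first `k` turns of a strategy. -/
abbrev SpIdx (X Y Z : ℕ → Type) (n k : ℕ) : Type := YPart Y n k × Z k × XPart X n k

section Stine

variable {X Y Z : ℕ → Type} [∀ i, Fintype (X i)] [∀ i, Fintype (Y i)] [∀ i, Fintype (Z i)]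
  [∀ i, DecidableEq (X i)] [∀ i, DecidableEq (Y i)] [∀ i, DecidableEq (Z i)] {n : ℕ}

/-- The amplification `1_{𝒴₁⊗⋯⊗𝒴ₖ} ⊗ U_{k+1} ⊗ 1_{𝒳_{k+2}⊗⋯⊗𝒳ₙ}` of the isometry `U_{k+1}`
(tensor factors implicitly reordered). -/
def ampU (U : (k : Fin n) → Matrix (Y k × Z (k + 1)) (Z k × X k) ℂ) (k : Fin n) :
    Matrix (SpIdx X Y Z n (k + 1)) (SpIdx X Y Z n k) ℂ :=
  Matrix.of fun p q =>
    (if (∀ i : {j : Fin n // (j : ℕ) < (k : ℕ)}, p.1 ⟨i.1, Nat.lt_succ_of_lt i.2⟩ = q.1 i)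
        ∧ (∀ i : {j : Fin n // (k : ℕ) + 1 ≤ (j : ℕ)}, p.2.2 i = q.2.2 ⟨i.1, Nat.le_of_succ_le i.2⟩)
      then (1 : ℂ) else 0)
    * U k (p.1 ⟨k, Nat.lt_succ_self _⟩, p.2.1) (q.2.1, q.2.2 ⟨k, Nat.le_refl _⟩)

/-- The ordered product `(1 ⊗ U_k)(1 ⊗ U_{k-1} ⊗ 1) ⋯ (U₁ ⊗ 1)`. -/
def prodU (U : (k : Fin n) → Matrix (Y k × Z (k + 1)) (Z k × X k) ℂ) :
    (k : ℕ) → k ≤ n → Matrix (SpIdx X Y Z n k) (SpIdx X Y Z n 0) ℂ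
  | 0, _ => 1
  | k + 1, h => ampU U ⟨k, h⟩ * prodU U k (Nat.le_of_succ_le h)

def toYPart (y : (i : Fin n) → Y i) : YPart Y n n := fun i => y i.1
def toXPart (x : (i : Fin n) → X i) : XPart X n 0 := fun i => x i.1
def emptyYPart : YPart Y n 0 := fun i => absurd i.2 (Nat.not_lt_zero _)
def emptyXPart : XPart X n n := fun i => absurd i.1.isLt (Nat.not_lt.mpr i.2)
def ofXPart (x : XPart X n 0) : (i : Fin n) → X i := fun i => x ⟨i, Nat.zero_le _⟩
def ofYPart (y : YPart Y n n) : (i : Fin n) → Y i := fun i => y ⟨i, i.isLt⟩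

/-- The channel `Ξₙ(M) = Tr_{𝒵ₙ}(U (vv* ⊗ M) U*)`, where
`U = (1_{𝒴₁⊗⋯⊗𝒴_{n-1}} ⊗ Uₙ) ⋯ (U₁ ⊗ 1_{𝒳₂⊗⋯⊗𝒳ₙ})`. -/
def stineOut (U : (k : Fin n) → Matrix (Y k × Z (k + 1)) (Z k × X k) ℂ) (v : Z 0 → ℂ)
    (M : Matrix ((i : Fin n) → X i) ((i : Fin n) → X i) ℂ) :
    Matrix ((i : Fin n) → Y i) ((i : Fin n) → Y i) ℂ :=
  Matrix.of fun y y' => ∑ zn : Z n,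
    (prodU U n (Nat.le_refl n)
      * (Matrix.of fun p q : SpIdx X Y Z n 0 =>
          v p.2.1 * star (v q.2.1) * M (ofXPart p.2.2) (ofXPart q.2.2))
      * (prodU U n (Nat.le_refl n))ᴴ)
      (toYPart y, zn, emptyXPart) (toYPart y', zn, emptyXPart)

/-- The Choi representation `J(Ξₙ)` of the channel `Ξₙ` above. -/
def stineChoi (U : (k : Fin n) → Matrix (Y k × Z (k + 1)) (Z k × X k) ℂ) (v : Z 0 → ℂ) :
    Matrix (StratIdx X Y n) (StratIdx X Y n) ℂ :=
  Matrix.of fun p q => stineOut U v (Matrix.single p.2 q.2 1) p.1 q.1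

end Stine


section RevU

variable {X Y Z : ℕ → Type} [∀ i, Fintype (X i)] [∀ i, Fintype (Y i)] [∀ i, Fintype (Z i)]
  [∀ i, DecidableEq (X i)] [∀ i, DecidableEq (Y i)] [∀ i, DecidableEq (Z i)] {n : ℕ}

/-- The transposed isometries `U_{n-k}ᵀ`, reindexed (with tensor factors implicitly
reordered) so that they constitute the steps of the time-reversed strategy, whose
turn-`k` input space is `𝒴_{n-k}`, output space is `𝒳_{n-k}`, and memory spaces are
`𝒵_{n-k}` and `𝒵_{n-k-1}`. -/
def revU (U : (k : Fin n) → Matrix (Y k × Z (k + 1)) (Z k × X k) ℂ) :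
    (k : Fin n) → Matrix (X (n - 1 - k) × Z (n - (k + 1))) (Z (n - k) × Y (n - 1 - k)) ℂ :=
  fun k => Matrix.of fun p q =>
    U ⟨n - 1 - k, by have := k.isLt; omega⟩
      (q.2, cast (congrArg Z (by have := k.isLt; omega : n - (k : ℕ) = (n - 1 - k) + 1)) q.1)
      (cast (congrArg Z (by omega : n - ((k : ℕ) + 1) = n - 1 - k)) p.2, p.1)

end RevU


section StratLemma

variable {X Y Z : ℕ → Type} [∀ i, Fintype (X i)] [∀ i, Fintype (Y i)] [∀ i, Fintype (Z i)]
  [∀ i, DecidableEq (X i)] [∀ i, DecidableEq (Y i)] [∀ i, DecidableEq (Z i)]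

/-- Closed-form "path amplitude" matrix: product `U_{k-1} ⋯ U_0` on the memory registers. -/
def chain : (k : ℕ) → ((j : Fin k) → Matrix (Y j × Z (j + 1)) (Z j × X j) ℂ) →
    ((j : Fin k) → Y j) → ((j : Fin k) → X j) → Matrix (Z k) (Z 0) ℂ
  | 0, _, _, _ => 1
  | k + 1, U, y, x =>
      (Matrix.of fun (z' : Z (k + 1)) (z : Z k) => U (Fin.last k) (y (Fin.last k), z') (z, x (Fin.last k)))
        * chain k (fun j => U j.castSucc) (Fin.init y) (Fin.init x)

instance {n : ℕ} : IsEmpty {j : Fin n // (j : ℕ) < 0} :=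
  ⟨fun j => Nat.not_lt_zero _ j.2⟩

instance {n : ℕ} : Subsingleton (YPart Y n 0) :=
  ⟨fun a b => funext fun i => absurd i.2 (Nat.not_lt_zero _)⟩

instance {n : ℕ} : IsEmpty {j : Fin n // n ≤ (j : ℕ)} :=
  ⟨fun j => absurd j.1.isLt (Nat.not_lt.mpr j.2)⟩

lemma prodU_apply {n : ℕ} (U : (k : Fin n) → Matrix (Y k × Z (k + 1)) (Z k × X k) ℂ) :
    ∀ (k : ℕ) (hk : k ≤ n) (p : SpIdx X Y Z n k) (q : SpIdx X Y Z n 0),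
    prodU U k hk p q =
      (if ∀ j : {i : Fin n // k ≤ (i : ℕ)}, p.2.2 j = q.2.2 ⟨j.1, Nat.zero_le _⟩ then 1 else 0)
        * chain k (fun j : Fin k => U ⟨j.1, lt_of_lt_of_le j.isLt hk⟩)
            (fun j => p.1 ⟨⟨j.1, lt_of_lt_of_le j.isLt hk⟩, j.isLt⟩)
            (fun j => q.2.2 ⟨⟨j.1, lt_of_lt_of_le j.isLt hk⟩, Nat.zero_le _⟩)
            p.2.1 q.2.1 := by
  intro k
  induction k with
  | zero =>
    rintro hk ⟨py, pz, px⟩ ⟨qy, qz, qx⟩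
    have hy : py = qy := Subsingleton.elim _ _
    subst hy
    have hcond : (∀ j : {i : Fin n // 0 ≤ (i : ℕ)}, px j = qx ⟨j.1, Nat.zero_le _⟩) ↔ px = qx := by
      constructor
      · intro h; funext j; exact h j
      · intro h j; rw [h]
    show (1 : Matrix (SpIdx X Y Z n 0) (SpIdx X Y Z n 0) ℂ) _ _ = _
    rw [Matrix.one_apply]
    simp only [chain, Matrix.one_apply, hcond]
    by_cases h1 : px = qx <;> by_cases h2 : pz = qz <;>
      simp [h1, h2, Prod.ext_iff]
  | succ k ih =>
    rintro hk ⟨py, pz, px⟩ ⟨qy, qz, qx⟩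
    rw [prodU, Matrix.mul_apply]
    have expand : ∀ r : SpIdx X Y Z n k,
        ampU U ⟨k, hk⟩ (py, pz, px) r * prodU U k (Nat.le_of_succ_le hk) r (qy, qz, qx)
          = (if r.1 = (fun i : {j : Fin n // (j : ℕ) < k} => py ⟨i.1, Nat.lt_succ_of_lt i.2⟩)
              then (1 : ℂ) else 0) *
            ((if r.2.2 = (fun j : {i : Fin n // k ≤ (i : ℕ)} => qx ⟨j.1, Nat.zero_le _⟩)
              then (1 : ℂ) else 0) *
              ((if ∀ j : {i : Fin n // k + 1 ≤ (i : ℕ)}, px j = qx ⟨j.1, Nat.zero_le _⟩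
                  then (1 : ℂ) else 0) *
                (U ⟨k, hk⟩ (py ⟨⟨k, hk⟩, Nat.lt_succ_self _⟩, pz)
                    (r.2.1, qx ⟨⟨k, hk⟩, Nat.zero_le _⟩) *
                  chain k (fun j : Fin k => U ⟨j.1, lt_of_lt_of_le j.isLt (Nat.le_of_succ_le hk)⟩)
                    (fun j => py ⟨⟨j.1, lt_of_lt_of_le j.isLt (Nat.le_of_succ_le hk)⟩,
                        Nat.lt_succ_of_lt j.isLt⟩)
                    (fun j => qx ⟨⟨j.1, lt_of_lt_of_le j.isLt (Nat.le_of_succ_le hk)⟩,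
                        Nat.zero_le _⟩)
                    r.2.1 qz))) := by
      rintro ⟨ry, rz, rx⟩
      rw [ih (Nat.le_of_succ_le hk) (ry, rz, rx) (qy, qz, qx)]
      simp only [ampU, Matrix.of_apply]
      by_cases h1 : ry = (fun i : {j : Fin n // (j : ℕ) < k} => py ⟨i.1, Nat.lt_succ_of_lt i.2⟩)
      · by_cases h2 : rx = (fun j : {i : Fin n // k ≤ (i : ℕ)} => qx ⟨j.1, Nat.zero_le _⟩)
        · subst h1; subst h2
          beta_reduce
          rw [if_congr (and_iff_right (fun i => rfl)) rfl rfl, if_pos (fun j => rfl),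
            if_pos rfl, if_pos rfl]
          ring
        · have hδ : ¬ (∀ j : {i : Fin n // k ≤ (i : ℕ)}, rx j = qx ⟨j.1, Nat.zero_le _⟩) :=
            fun hc => h2 (funext fun j => hc j)
          rw [if_neg hδ, if_neg h2]
          ring
      · have hδ : ¬ ((∀ i : {j : Fin n // (j : ℕ) < k}, py ⟨i.1, Nat.lt_succ_of_lt i.2⟩ = ry i)
            ∧ ∀ i : {j : Fin n // k + 1 ≤ (j : ℕ)}, px i = rx ⟨i.1, Nat.le_of_succ_le i.2⟩) :=
            fun hc => h1 (funext fun i => (hc.1 i).symm)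
        rw [if_neg hδ, if_neg h1]
        ring
    rw [Finset.sum_congr rfl fun r _ => expand r]
    simp only [Fintype.sum_prod_type, ite_mul, mul_ite, one_mul, zero_mul, mul_zero,
      Finset.sum_ite_eq', Finset.sum_ite_irrel, Finset.sum_const_zero,
      Finset.mem_univ, if_true]
    rw [chain]
    simp only [Matrix.mul_apply, Matrix.of_apply, Fin.val_last, Fin.coe_castSucc, Fin.init]
    rfl


instance {n : ℕ} : Unique (YPart Y n 0) :=
  ⟨⟨fun i => absurd i.2 (Nat.not_lt_zero _)⟩, fun _ => funext fun i => absurd i.2 (Nat.not_lt_zero _)⟩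

/-- The "amplitude vector" of the Stinespring channel. -/
def Fvec {n : ℕ} (U : (k : Fin n) → Matrix (Y k × Z (k + 1)) (Z k × X k) ℂ) (v : Z 0 → ℂ)
    (y : (i : Fin n) → Y i) (x : (i : Fin n) → X i) (zn : Z n) : ℂ :=
  ∑ z0, chain n U y x zn z0 * v z0

lemma ofXPart_eq_iff {n : ℕ} (x : (i : Fin n) → X i) (sx : XPart X n 0) :
    (x = ofXPart sx) ↔ sx = toXPart x := by
  constructor
  · intro h; funext i; rw [h]; rfl
  · intro h; subst h; rfl

lemma key1 {n : ℕ} (U : (k : Fin n) → Matrix (Y k × Z (k + 1)) (Z k × X k) ℂ) (v : Z 0 → ℂ)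
    (y : (i : Fin n) → Y i) (x : (i : Fin n) → X i) (zn : Z n) :
    ∑ s : SpIdx X Y Z n 0, prodU U n (Nat.le_refl n) (toYPart y, zn, emptyXPart) s
        * (v s.2.1 * (if x = ofXPart s.2.2 then 1 else 0))
      = Fvec U v y x zn := by
  have hrw : ∀ s : SpIdx X Y Z n 0,
      prodU U n (Nat.le_refl n) (toYPart y, zn, emptyXPart) s
        * (v s.2.1 * (if x = ofXPart s.2.2 then 1 else 0))
      = (if s.2.2 = toXPart x then (1:ℂ) else 0) *
          (chain n (fun j : Fin n => U ⟨j.1, j.isLt⟩) y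
            (fun j => s.2.2 ⟨⟨j.1, j.isLt⟩, Nat.zero_le _⟩) zn s.2.1 * v s.2.1) := by
    intro s
    rw [prodU_apply U n (Nat.le_refl n) (toYPart y, zn, emptyXPart) s,
      if_pos (fun j => absurd j.1.isLt (Nat.not_lt.mpr j.2))]
    by_cases h : s.2.2 = toXPart x
    · rw [if_pos h, if_pos ((ofXPart_eq_iff x s.2.2).mpr h)]
      simp only [one_mul, mul_one]
      rfl
    · rw [if_neg h, if_neg (fun hc => h ((ofXPart_eq_iff x s.2.2).mp hc))]
      ring
  rw [Finset.sum_congr rfl fun s _ => hrw s]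
  simp only [Fintype.sum_prod_type, ite_mul, mul_ite, one_mul, zero_mul, mul_zero,
    Finset.sum_ite_eq', Finset.sum_ite_irrel, Finset.sum_const_zero,
    Finset.mem_univ, if_true, Fintype.sum_unique]
  rfl


lemma stineChoi_apply {n : ℕ} (U : (k : Fin n) → Matrix (Y k × Z (k + 1)) (Z k × X k) ℂ)
    (v : Z 0 → ℂ) (p q : StratIdx X Y n) :
    stineChoi U v p q = ∑ zn : Z n, Fvec U v p.1 p.2 zn * star (Fvec U v q.1 q.2 zn) := by
  unfold stineChoi stineOut
  simp only [Matrix.of_apply]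
  refine Finset.sum_congr rfl fun zn _ => ?_
  rw [Matrix.mul_apply]
  have hterm : ∀ r : SpIdx X Y Z n 0,
      (prodU U n (Nat.le_refl n)
          * Matrix.of (fun p' q' : SpIdx X Y Z n 0 =>
              v p'.2.1 * star (v q'.2.1)
                * Matrix.single p.2 q.2 1 (ofXPart p'.2.2) (ofXPart q'.2.2)))
          (toYPart p.1, zn, emptyXPart) r
        * (prodU U n (Nat.le_refl n))ᴴ r (toYPart q.1, zn, emptyXPart)
      = (∑ s : SpIdx X Y Z n 0, prodU U n (Nat.le_refl n) (toYPart p.1, zn, emptyXPart) s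
          * (v s.2.1 * (if p.2 = ofXPart s.2.2 then 1 else 0)))
        * star (prodU U n (Nat.le_refl n) (toYPart q.1, zn, emptyXPart) r
          * (v r.2.1 * (if q.2 = ofXPart r.2.2 then 1 else 0))) := by
    intro r
    rw [Matrix.mul_apply, Matrix.conjTranspose_apply, star_mul']
    have hB : ∀ j : SpIdx X Y Z n 0,
        Matrix.of (fun p' q' : SpIdx X Y Z n 0 =>
            v p'.2.1 * star (v q'.2.1)
              * Matrix.single p.2 q.2 1 (ofXPart p'.2.2) (ofXPart q'.2.2)) j r
          = (v j.2.1 * (if p.2 = ofXPart j.2.2 then 1 else 0))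
            * star (v r.2.1 * (if q.2 = ofXPart r.2.2 then 1 else 0)) := by
      intro j
      simp only [Matrix.of_apply, Matrix.single, star_mul', star_one,
        star_zero]
      by_cases h1 : p.2 = ofXPart j.2.2 <;> by_cases h2 : q.2 = ofXPart r.2.2 <;>
        simp [h1, h2] <;> ring
    rw [Finset.sum_congr rfl fun j _ => by rw [hB j]]
    have hpull : (∑ j : SpIdx X Y Z n 0,
        prodU U n (Nat.le_refl n) (toYPart p.1, zn, emptyXPart) j
          * ((v j.2.1 * (if p.2 = ofXPart j.2.2 then 1 else 0))
            * star (v r.2.1 * (if q.2 = ofXPart r.2.2 then 1 else 0))))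
        = (∑ j : SpIdx X Y Z n 0,
            prodU U n (Nat.le_refl n) (toYPart p.1, zn, emptyXPart) j
              * (v j.2.1 * (if p.2 = ofXPart j.2.2 then 1 else 0)))
          * star (v r.2.1 * (if q.2 = ofXPart r.2.2 then 1 else 0)) := by
      rw [Finset.sum_mul]
      exact Finset.sum_congr rfl fun j _ => by ring
    rw [hpull, star_mul']
    ring
  rw [Finset.sum_congr rfl fun r _ => hterm r, ← Finset.mul_sum, ← star_sum, key1, key1]


lemma unit_sum {ι κ : Type} [Fintype ι] [Fintype κ] [DecidableEq κ]
    (A : Matrix ι κ ℂ) (hA : Aᴴ * A = 1) (c c' : κ) :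
    ∑ r, A r c * star (A r c') = if c = c' then 1 else 0 := by
  have h : (Aᴴ * A) c' c = (1 : Matrix κ κ ℂ) c' c := by rw [hA]
  rw [Matrix.mul_apply, Matrix.one_apply] at h
  simp only [Matrix.conjTranspose_apply] at h
  calc ∑ r, A r c * star (A r c') = ∑ r, star (A r c') * A r c :=
        Finset.sum_congr rfl fun r _ => mul_comm _ _
    _ = if c' = c then 1 else 0 := h
    _ = if c = c' then 1 else 0 := by
        by_cases hcc : c = c'
        · simp [hcc]
        · rw [if_neg hcc, if_neg (fun hc : c' = c => hcc hc.symm)]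

lemma stineChoi_posSemidef {n : ℕ} (U : (k : Fin n) → Matrix (Y k × Z (k + 1)) (Z k × X k) ℂ)
    (v : Z 0 → ℂ) : (stineChoi U v).PosSemidef := by
  have : stineChoi U v
      = (Matrix.of fun (p : StratIdx X Y n) (zn : Z n) => Fvec U v p.1 p.2 zn)
        * (Matrix.of fun (p : StratIdx X Y n) (zn : Z n) => Fvec U v p.1 p.2 zn)ᴴ := by
    ext p q
    rw [stineChoi_apply, Matrix.mul_apply]
    simp [Matrix.conjTranspose_apply]
  rw [this]
  exact Matrix.posSemidef_self_mul_conjTranspose _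

lemma Fvec_succ {n : ℕ} (U : (k : Fin (n + 1)) → Matrix (Y k × Z (k + 1)) (Z k × X k) ℂ)
    (v : Z 0 → ℂ) (y : (i : Fin (n + 1)) → Y i) (x : (i : Fin (n + 1)) → X i) (ζ : Z (n + 1)) :
    Fvec U v y x ζ
      = ∑ zn : Z n, U (Fin.last n) (y (Fin.last n), ζ) (zn, x (Fin.last n))
          * Fvec (fun k : Fin n => U k.castSucc) v (Fin.init y) (Fin.init x) zn := by
  unfold Fvec
  simp only [chain, Matrix.mul_apply, Matrix.of_apply, Finset.sum_mul]
  rw [Finset.sum_comm]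
  refine Finset.sum_congr rfl fun zn _ => ?_
  rw [Finset.mul_sum]
  exact Finset.sum_congr rfl fun z0 _ => by ring


lemma star_ite01 (P : Prop) [Decidable P] : star (if P then (1:ℂ) else 0) = if P then 1 else 0 := by
  split <;> simp

lemma stine_isStrategy (n : ℕ) :
    ∀ (U : (k : Fin n) → Matrix (Y k × Z (k + 1)) (Z k × X k) ℂ),
      (∀ k, (U k)ᴴ * U k = 1) → ∀ v : Z 0 → ℂ, (∑ z, Complex.normSq (v z)) = 1 →
      IsStrategy X Y n (stineChoi U v) := by
  induction n with
  | zero =>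
    intro U hU v hv
    show stineChoi U v = 1
    ext p q
    have hpq : p = q := Subsingleton.elim p q
    subst hpq
    rw [stineChoi_apply, Matrix.one_apply_eq]
    have hFv : ∀ z : Z 0, Fvec U v p.1 p.2 z = v z := by
      intro z
      unfold Fvec
      simp [chain, Matrix.one_apply]
    simp only [hFv]
    have hmc : ∀ z : Z 0, v z * star (v z) = (Complex.normSq (v z) : ℂ) :=
      fun z => Complex.mul_conj _
    rw [Finset.sum_congr rfl fun z _ => hmc z, ← Complex.ofReal_sum, hv, Complex.ofReal_one]
  | succ n ih =>
    intro U hU v hv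
    refine ⟨stineChoi_posSemidef U v, stineChoi (fun k : Fin n => U k.castSucc) v,
      ih _ (fun k => hU k.castSucc) v hv, ?_⟩
    intro y y' x x'
    set A : Matrix (Y n × Z (n + 1)) (Z n × X n) ℂ := U (Fin.last n) with hA
    set F : Z n → ℂ := Fvec (fun k : Fin n => U k.castSucc) v y (Fin.init x) with hF
    set F' : Z n → ℂ := Fvec (fun k : Fin n => U k.castSucc) v y' (Fin.init x') with hF'
    set g : Z n × X n → ℂ := fun c => (if c.2 = x (Fin.last n) then 1 else 0) * F c.1 with hg
    set g' : Z n × X n → ℂ := fun c => (if c.2 = x' (Fin.last n) then 1 else 0) * F' c.1 with hg'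
    have hFvec : ∀ (b : Y n) (ζ : Z (n + 1)),
        Fvec U v (Fin.snoc y b) x ζ = (A *ᵥ g) (b, ζ) := by
      intro b ζ
      rw [Fvec_succ]
      simp only [Fin.snoc_last, Fin.init_snoc, hg, hF, Matrix.mulVec, dotProduct,
        Fintype.sum_prod_type, mul_ite, ite_mul, mul_zero, zero_mul, mul_one, one_mul,
        Finset.sum_ite_eq', Finset.sum_ite_irrel, Finset.sum_const_zero,
        Finset.mem_univ, if_true]
      rfl
    have hFvec' : ∀ (b : Y n) (ζ : Z (n + 1)),
        Fvec U v (Fin.snoc y' b) x' ζ = (A *ᵥ g') (b, ζ) := by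
      intro b ζ
      rw [Fvec_succ]
      simp only [Fin.snoc_last, Fin.init_snoc, hg', hF', Matrix.mulVec, dotProduct,
        Fintype.sum_prod_type, mul_ite, ite_mul, mul_zero, zero_mul, mul_one, one_mul,
        Finset.sum_ite_eq', Finset.sum_ite_irrel, Finset.sum_const_zero,
        Finset.mem_univ, if_true]
      rfl
    calc ∑ b : Y n, stineChoi U v (Fin.snoc y b, x) (Fin.snoc y' b, x')
        = ∑ b : Y n, ∑ ζ : Z (n + 1), (A *ᵥ g) (b, ζ) * star ((A *ᵥ g') (b, ζ)) := by
          refine Finset.sum_congr rfl fun b _ => ?_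
          rw [stineChoi_apply]
          exact Finset.sum_congr rfl fun ζ _ => by rw [hFvec b ζ, hFvec' b ζ]
      _ = ∑ r : Y n × Z (n + 1), (A *ᵥ g) r * star ((A *ᵥ g') r) := by
          rw [Fintype.sum_prod_type]
      _ = (A *ᵥ g) ⬝ᵥ star (A *ᵥ g') := rfl
      _ = star (A *ᵥ g') ⬝ᵥ (A *ᵥ g) := dotProduct_comm _ _
      _ = (star g' ᵥ* Aᴴ) ⬝ᵥ (A *ᵥ g) := by rw [Matrix.star_mulVec]
      _ = ((star g' ᵥ* Aᴴ) ᵥ* A) ⬝ᵥ g := by rw [Matrix.dotProduct_mulVec]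
      _ = (star g' ᵥ* (Aᴴ * A)) ⬝ᵥ g := by rw [Matrix.vecMul_vecMul]
      _ = star g' ⬝ᵥ g := by rw [hA, hU (Fin.last n), Matrix.vecMul_one]
      _ = stineChoi (fun k : Fin n => U k.castSucc) v (y, Fin.init x) (y', Fin.init x')
            * (if x (Fin.last n) = x' (Fin.last n) then 1 else 0) := by
          rw [stineChoi_apply]
          simp only [dotProduct, hg, hg', Pi.star_apply, star_mul', star_ite01,
            Fintype.sum_prod_type, mul_ite, ite_mul, mul_zero, zero_mul, mul_one, one_mul,
            Finset.sum_ite_eq', Finset.sum_ite_irrel, Finset.sum_const_zero,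
            Finset.mem_univ, if_true]
          by_cases hxx : x (Fin.last n) = x' (Fin.last n)
          · simp only [hxx, if_true, eq_self_iff_true]
            exact Finset.sum_congr rfl fun zn _ => mul_comm _ _
          · simp [hxx]

end StratLemma

theorem reversed_stinespring_is_strategy
    (n : ℕ) (hn : 0 < n)
    (X Y Z : ℕ → Type) [∀ i, Fintype (X i)] [∀ i, Fintype (Y i)] [∀ i, Fintype (Z i)]
    [∀ i, DecidableEq (X i)] [∀ i, DecidableEq (Y i)] [∀ i, DecidableEq (Z i)]
    (hdim : ∀ k : Fin n, Fintype.card (Z k × X k) = Fintype.card (Y k × Z (k + 1)))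
    (U : (k : Fin n) → Matrix (Y k × Z (k + 1)) (Z k × X k) ℂ)
    (hU : ∀ k : Fin n, (U k)ᴴ * U k = 1 ∧ U k * (U k)ᴴ = 1)
    (w : Z n → ℂ) (hw : ∑ z, Complex.normSq (w z) = 1) :
    IsStrategy (fun i => Y (n - 1 - i)) (fun i => X (n - 1 - i)) n
      (stineChoi (X := fun i => Y (n - 1 - i)) (Y := fun i => X (n - 1 - i))
        (Z := fun i => Z (n - i)) (revU U) w) := by
  refine stine_isStrategy (X := fun i => Y (n - 1 - i)) (Y := fun i => X (n - 1 - i))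
    (Z := fun i => Z (n - i)) n (revU U) ?_ w hw
  intro k
  have hk := k.isLt
  set m : Fin n := ⟨n - 1 - ↑k, by omega⟩ with hm
  have h1 : n - ↑k = (n - 1 - ↑k) + 1 := by omega
  have h2 : n - (↑k + 1) = n - 1 - ↑k := by omega
  let fe : (X (n - 1 - ↑k) × Z (n - (↑k + 1))) ≃ (Z (n - 1 - ↑k) × X (n - 1 - ↑k)) :=
    (Equiv.prodComm _ _).trans
      (Equiv.prodCongr (Equiv.cast (congrArg Z h2)) (Equiv.refl _))
  let ge : (Z (n - ↑k) × Y (n - 1 - ↑k)) ≃ (Y (n - 1 - ↑k) × Z ((n - 1 - ↑k) + 1)) :=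
    (Equiv.prodComm _ _).trans
      (Equiv.prodCongr (Equiv.refl _) (Equiv.cast (congrArg Z h1)))
  have hrev : revU U k = ((U m)ᵀ).submatrix ⇑fe ⇑ge := by
    ext ⟨a, b⟩ ⟨c, d⟩
    rfl
  have hUt : ((U m)ᵀ)ᴴ * (U m)ᵀ = 1 := by
    have h := congrArg Matrix.transpose (hU m).2
    rw [Matrix.transpose_mul, Matrix.transpose_one] at h
    have he : ((U m)ᵀ)ᴴ = ((U m)ᴴ)ᵀ := by ext i j; rfl
    rw [he]
    exact h
  rw [hrev, Matrix.conjTranspose_submatrix, Matrix.submatrix_mul_equiv, hUt,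
    Matrix.submatrix_one_equiv]

end
end
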